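/- If V(x_n, v_n) and V(x_m, v_m) are positive semi-definite, then with the canonical choices ℓ = η(x_n, x_m) and f = ⟨x_n, x_m⟩ the matrix Q(x_n, x_m, v_n, v_m, f, ℓ) is positive semi-definite. -/

import Mathlib

open Finset Matrix

/-- The Minkowski bilinear form on `ℝ^{d+1}`. -/
noncomputable def minkowski {d : ℕ} (x y : Fin (d+1) → ℝ) : ℝ :=
  (∑ i : Fin d, x i.castSucc * y i.castSucc) - x (Fin.last d) * y (Fin.last d)

/-- `ξ̃ = (ξ_1, …, ξ_d, −ξ_{d+1})`. -/
def tilde {d : ℕ} (x : Fin (d+1) → ℝ) : Fin (d+1) → ℝ :=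
  fun i => if i = Fin.last d then -x i else x i

/-- The symmetric `(d+5)×(d+5)` block matrix `Q`. -/
noncomputable def Qmat {d : ℕ} (xn xm : Fin (d+1) → ℝ) (vn vm f l : ℝ) :
    Matrix (Fin (d+1+4)) (Fin (d+1+4)) ℝ :=
  Matrix.reindex finSumFinEquiv finSumFinEquiv
    (Matrix.fromBlocks 1 (Matrix.of fun i j => ![xn, tilde xn, xm, tilde xm] j i)
      (Matrix.of fun i j => ![xn, tilde xn, xm, tilde xm] i j)
      !![vn, -1, f, l; -1, vn, l, f; f, l, vm, -1; l, f, -1, vm])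

/-- The symmetric `(d+3)×(d+3)` block matrix `V`. -/
noncomputable def Vmat {d : ℕ} (x : Fin (d+1) → ℝ) (v : ℝ) :
    Matrix (Fin (d+1+2)) (Fin (d+1+2)) ℝ :=
  Matrix.reindex finSumFinEquiv finSumFinEquiv
    (Matrix.fromBlocks 1 (Matrix.of fun i j => ![x, tilde x] j i)
      (Matrix.of fun i j => ![x, tilde x] i j)
      !![v, -1; -1, v])

lemma sum_mul_tilde {d : ℕ} (x y : Fin (d+1) → ℝ) :
    ∑ i, x i * tilde y i = minkowski x y := by
  rw [Fin.sum_univ_castSucc, minkowski]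
  congr 1
  · refine Finset.sum_congr rfl fun i _ => ?_
    simp [tilde, (Fin.castSucc_lt_last i).ne]
  · simp [tilde]

lemma sum_tilde_tilde {d : ℕ} (x y : Fin (d+1) → ℝ) :
    ∑ i, tilde x i * tilde y i = ∑ i, x i * y i := by
  refine Finset.sum_congr rfl fun i _ => ?_
  by_cases h : i = Fin.last d <;> simp [tilde, h]

lemma sum_tilde_mul {d : ℕ} (x y : Fin (d+1) → ℝ) :
    ∑ i, tilde x i * y i = minkowski x y := by
  rw [← sum_mul_tilde x y]
  refine Finset.sum_congr rfl fun i _ => ?_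
  by_cases h : i = Fin.last d <;> simp [tilde, h]

lemma mink_comm {d : ℕ} (x y : Fin (d+1) → ℝ) : minkowski x y = minkowski y x := by
  unfold minkowski
  congr 1
  · exact Finset.sum_congr rfl fun i _ => mul_comm _ _
  · ring

lemma tilde_tilde {d : ℕ} (x : Fin (d+1) → ℝ) : tilde (tilde x) = x := by
  funext i
  by_cases h : i = Fin.last d <;> simp [tilde, h]

lemma mink_tilde_left {d : ℕ} (x y : Fin (d+1) → ℝ) :
    minkowski (tilde x) y = ∑ i, x i * y i := by
  rw [← sum_tilde_mul (tilde x) y, tilde_tilde]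

lemma mink_tilde_right {d : ℕ} (x y : Fin (d+1) → ℝ) :
    minkowski x (tilde y) = ∑ i, x i * y i := by
  rw [← sum_mul_tilde x (tilde y), tilde_tilde]

lemma conj_eq {k m : ℕ} (v : Fin k → Fin m → ℝ) :
    (Matrix.of fun (i : Fin m) (j : Fin k) => v j i)ᴴ = Matrix.of fun i j => v i j := by
  ext i j
  simp [conjTranspose_apply]

lemma psd_reindex_fromBlocks {k m : ℕ} (B : Matrix (Fin m) (Fin k) ℝ)
    (D : Matrix (Fin k) (Fin k) ℝ) :
    (Matrix.reindex finSumFinEquiv finSumFinEquiv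
      (Matrix.fromBlocks 1 B Bᴴ D)).PosSemidef ↔ (D - Bᴴ * B).PosSemidef := by
  haveI : Invertible (1 : Matrix (Fin m) (Fin m) ℝ) := invertibleOne
  rw [Matrix.reindex_apply, posSemidef_submatrix_equiv,
    PosDef.fromBlocks₁₁ B D Matrix.PosDef.one, inv_one, Matrix.mul_one]

lemma fromBlocks_diag_psd {m n : Type*} [Fintype m] [Fintype n] [DecidableEq m]
    [DecidableEq n] {A : Matrix m m ℝ} {D : Matrix n n ℝ}
    (hA : A.PosSemidef) (hD : D.PosSemidef) : (Matrix.fromBlocks A 0 0 D).PosSemidef := by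
  refine posSemidef_iff_dotProduct_mulVec.mpr ⟨?_, ?_⟩
  · show (Matrix.fromBlocks A 0 0 D)ᴴ = _
    rw [Matrix.fromBlocks_conjTranspose, Matrix.conjTranspose_zero,
      Matrix.conjTranspose_zero, hA.1.eq, hD.1.eq]
  · intro x
    rw [← Sum.elim_comp_inl_inr x, Matrix.fromBlocks_mulVec]
    simp only [Matrix.zero_mulVec, add_zero, zero_add, star_trivial,
      sumElim_dotProduct_sumElim, Sum.elim_comp_inl, Sum.elim_comp_inr]
    have h1 := hA.dotProduct_mulVec_nonneg (x ∘ Sum.inl)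
    have h2 := hD.dotProduct_mulVec_nonneg (x ∘ Sum.inr)
    simp only [star_trivial] at h1 h2
    exact add_nonneg h1 h2

lemma four_block_psd {a b c e : ℝ} (h1 : (!![a,b;b,a]).PosSemidef)
    (h2 : (!![c,e;e,c]).PosSemidef) :
    (!![a,b,0,0; b,a,0,0; 0,0,c,e; 0,0,e,c] : Matrix (Fin 4) (Fin 4) ℝ).PosSemidef := by
  have h := (posSemidef_submatrix_equiv
      (finSumFinEquiv (m := 2) (n := 2)).symm).mpr (fromBlocks_diag_psd h1 h2)
  convert h using 1
  ext i j
  fin_cases i <;> fin_cases j <;> rfl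

/-- If `V(x_n, v_n)` and `V(x_m, v_m)` are positive semi-definite, then with the
canonical choices `ℓ = η(x_n,x_m)` and `f = ⟨x_n,x_m⟩` the matrix `Q` is
positive semi-definite. -/
theorem Qmat_posSemidef_of_Vmat_posSemidef (d : ℕ) (xn xm : Fin (d+1) → ℝ)
    (vn vm : ℝ) (hVn : (Vmat xn vn).PosSemidef) (hVm : (Vmat xm vm).PosSemidef) :
    (Qmat xn xm vn vm (∑ i, xn i * xm i) (minkowski xn xm)).PosSemidef := by
  rw [Vmat, ← conj_eq ![xn, tilde xn], psd_reindex_fromBlocks] at hVn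
  rw [Vmat, ← conj_eq ![xm, tilde xm], psd_reindex_fromBlocks] at hVm
  rw [Qmat, ← conj_eq ![xn, tilde xn, xm, tilde xm], psd_reindex_fromBlocks]
  have hn : !![vn, -1; -1, vn] - (Matrix.of fun (i : Fin (d+1)) (j : Fin 2) =>
      ![xn, tilde xn] j i)ᴴ * (Matrix.of fun i j => ![xn, tilde xn] j i) =
      !![vn - ∑ i, xn i * xn i, -1 - minkowski xn xn;
         -1 - minkowski xn xn, vn - ∑ i, xn i * xn i] := by
    ext i j
    fin_cases i <;> fin_cases j <;>
      simp [Matrix.mul_apply, Matrix.conjTranspose_apply, sum_mul_tilde, sum_tilde_mul,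
        sum_tilde_tilde, mink_tilde_left, mink_tilde_right, Matrix.vecHead, Matrix.vecTail]
  have hm : !![vm, -1; -1, vm] - (Matrix.of fun (i : Fin (d+1)) (j : Fin 2) =>
      ![xm, tilde xm] j i)ᴴ * (Matrix.of fun i j => ![xm, tilde xm] j i) =
      !![vm - ∑ i, xm i * xm i, -1 - minkowski xm xm;
         -1 - minkowski xm xm, vm - ∑ i, xm i * xm i] := by
    ext i j
    fin_cases i <;> fin_cases j <;>
      simp [Matrix.mul_apply, Matrix.conjTranspose_apply, sum_mul_tilde, sum_tilde_mul,
        sum_tilde_tilde, mink_tilde_left, mink_tilde_right, Matrix.vecHead, Matrix.vecTail]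
  rw [hn] at hVn
  rw [hm] at hVm
  have hcomm : ∑ i, xm i * xn i = ∑ i, xn i * xm i :=
    Finset.sum_congr rfl fun i _ => mul_comm _ _
  have key : !![vn, -1, ∑ i, xn i * xm i, minkowski xn xm;
      -1, vn, minkowski xn xm, ∑ i, xn i * xm i;
      ∑ i, xn i * xm i, minkowski xn xm, vm, -1;
      minkowski xn xm, ∑ i, xn i * xm i, -1, vm] -
      (Matrix.of fun (i : Fin (d+1)) (j : Fin 4) => ![xn, tilde xn, xm, tilde xm] j i)ᴴ *
      (Matrix.of fun i j => ![xn, tilde xn, xm, tilde xm] j i) =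
      !![vn - ∑ i, xn i * xn i, -1 - minkowski xn xn, 0, 0;
         -1 - minkowski xn xn, vn - ∑ i, xn i * xn i, 0, 0;
         0, 0, vm - ∑ i, xm i * xm i, -1 - minkowski xm xm;
         0, 0, -1 - minkowski xm xm, vm - ∑ i, xm i * xm i] := by
    ext i j
    fin_cases i <;> fin_cases j <;>
      simp [Matrix.mul_apply, Matrix.conjTranspose_apply, sum_mul_tilde, sum_tilde_mul,
        sum_tilde_tilde, mink_tilde_left, mink_tilde_right, hcomm, mink_comm xm xn,
        Matrix.vecHead, Matrix.vecTail]
  rw [key]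
  exact four_block_psd hVn hVm
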